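/- Let n ≥ 1, d > 0, a ∈ ℝⁿ a constant vector, L₁,…,Lₙ > 0, and Ω = (0,L₁) × ⋯ × (0,Lₙ). Assume f satisfies (F), g satisfies (G-ext), and ∑_{i=1}^n 1/Lᵢ² > (1/(dπ²))·[f'(0) + ln(g'(0)) − |a|²/(4d)]. Then every solution of the impulsive reaction–diffusion system on Ω satisfies lim_{m→∞} N_m(x) = 0 for every x ∈ Ω. -/

import Mathlib

open Real Filter MeasureTheory
open scoped Topology ENNReal

noncomputable section

/-- First-order partial derivative of `u` in the `i`-th coordinate direction. -/
def pd {n : ℕ} (u : EuclideanSpace ℝ (Fin n) → ℝ) (i : Fin n)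
    (x : EuclideanSpace ℝ (Fin n)) : ℝ :=
  fderiv ℝ u x (EuclideanSpace.single i 1)

/-- Second-order partial derivative `∂ᵢ∂ⱼ u`. -/
def pd2 {n : ℕ} (u : EuclideanSpace ℝ (Fin n) → ℝ) (i j : Fin n)
    (x : EuclideanSpace ℝ (Fin n)) : ℝ :=
  pd (fun y => pd u j y) i x

/-- Laplacian of `u`. -/
def lap {n : ℕ} (u : EuclideanSpace ℝ (Fin n) → ℝ) (x : EuclideanSpace ℝ (Fin n)) : ℝ :=
  ∑ i, pd2 u i i x

/-- Assumption (F): `f` is locally Lipschitz, `f 0 = 0`, `f` is differentiable at `0`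
with derivative `f'0 ≠ 0`, and there is a differentiable `h` with `h 0 = h' 0 = 0` such that
`f'0 * N - h N ≤ f N ≤ f'0 * N` for all `N ≥ 0`. -/
def SatF (f : ℝ → ℝ) (f'0 : ℝ) : Prop :=
  LocallyLipschitz f ∧ f 0 = 0 ∧ HasDerivAt f f'0 0 ∧ f'0 ≠ 0 ∧
    ∃ h : ℝ → ℝ, Differentiable ℝ h ∧ h 0 = 0 ∧ deriv h 0 = 0 ∧
      ∀ N : ℝ, 0 ≤ N → f'0 * N - h N ≤ f N ∧ f N ≤ f'0 * N

/-- Assumption (G-ext): `g : [0,∞) → [0,∞)` is continuous, `g 0 = 0`, `g N > 0` for `N > 0`,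
`g` is differentiable at `0` (within `[0,∞)`) with derivative `g'0 > 0`, and
`g N ≤ g'0 * N` for all `N > 0`. -/
def SatGext (g : ℝ → ℝ) (g'0 : ℝ) : Prop :=
  ContinuousOn g (Set.Ici 0) ∧ g 0 = 0 ∧ (∀ N : ℝ, 0 < N → 0 < g N) ∧
    HasDerivWithinAt g g'0 (Set.Ici 0) 0 ∧ 0 < g'0 ∧ ∀ N : ℝ, 0 < N → g N ≤ g'0 * N

/-- A solution of the impulsive reaction-diffusion system
`∂ₜ u⁽ᵐ⁾ = d Δu⁽ᵐ⁾ - a ⬝ ∇u⁽ᵐ⁾ + f (u⁽ᵐ⁾)` on `Ω × (0,1]` with hostile (Dirichlet) boundary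
conditions, initial data `u⁽ᵐ⁾(·,0) = g (N_m ·)` and update rule `N_{m+1} = u⁽ᵐ⁾(·,1)`. -/
structure ImpSol (n : ℕ) (Ω : Set (EuclideanSpace ℝ (Fin n))) (d : ℝ)
    (a : EuclideanSpace ℝ (Fin n) → EuclideanSpace ℝ (Fin n)) (f g : ℝ → ℝ) where
  N : ℕ → EuclideanSpace ℝ (Fin n) → ℝ
  u : ℕ → EuclideanSpace ℝ (Fin n) → ℝ → ℝ
  N_cont : ∀ m, ContinuousOn (N m) (closure Ω)
  N_nonneg : ∀ m, ∀ x ∈ closure Ω, 0 ≤ N m x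
  N0_bdry : ∀ x ∈ frontier Ω, N 0 x = 0
  u_nonneg : ∀ m, ∀ x ∈ closure Ω, ∀ t ∈ Set.Icc (0:ℝ) 1, 0 ≤ u m x t
  u_cont : ∀ m, ContinuousOn (fun p : EuclideanSpace ℝ (Fin n) × ℝ => u m p.1 p.2)
    (closure Ω ×ˢ Set.Icc (0:ℝ) 1)
  u_space_C2 : ∀ m, ∀ t ∈ Set.Ioc (0:ℝ) 1, ∀ x ∈ Ω, ContDiffAt ℝ 2 (fun y => u m y t) x
  u_time_C1 : ∀ m, ∀ x ∈ Ω, ∀ t ∈ Set.Ioc (0:ℝ) 1, ContDiffAt ℝ 1 (fun s => u m x s) t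
  pde : ∀ m, ∀ x ∈ Ω, ∀ t ∈ Set.Ioc (0:ℝ) 1,
    deriv (fun s => u m x s) t =
      d * lap (fun y => u m y t) x - (∑ i, a x i * pd (fun y => u m y t) i x) + f (u m x t)
  bdry : ∀ m, ∀ x ∈ frontier Ω, ∀ t ∈ Set.Ioc (0:ℝ) 1, u m x t = 0
  init : ∀ m, ∀ x ∈ Ω, u m x 0 = g (N m x)
  recur : ∀ m, ∀ x ∈ closure Ω, N (m + 1) x = u m x 1

variable {n : ℕ}

local notation "E" => EuclideanSpace ℝ (Fin n)

lemma pd_of_hasFDerivAt {F : E → ℝ} {F' : E →L[ℝ] ℝ} {x : E} (h : HasFDerivAt F F' x)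
    (i : Fin n) : pd F i x = F' (EuclideanSpace.single i 1) := by
  rw [pd, h.fderiv]

lemma differentiableAt_pd {F : E → ℝ} {x : E} (hF : ContDiffAt ℝ 2 F x) (i : Fin n) :
    DifferentiableAt ℝ (fun y => pd F i y) x := by
  have h1 : ContDiffAt ℝ 1 (fderiv ℝ F) x := hF.fderiv_right (by norm_num)
  have h2 : DifferentiableAt ℝ (fderiv ℝ F) x := h1.differentiableAt (by norm_num)
  exact (ContinuousLinearMap.apply ℝ ℝ (EuclideanSpace.single i 1)).differentiableAt.comp x h2

lemma pd_add_const_mul {F G : E → ℝ} {x : E} (hF : DifferentiableAt ℝ F x)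
    (hG : DifferentiableAt ℝ G x) (c : ℝ) (i : Fin n) :
    pd (fun y => F y + c * G y) i x = pd F i x + c * pd G i x := by
  have h := (hF.hasFDerivAt.add ((hG.hasFDerivAt).const_smul c))
  have : pd (fun y => F y + c * G y) i x
      = (fderiv ℝ F x + c • fderiv ℝ G x) (EuclideanSpace.single i 1) := by
    refine pd_of_hasFDerivAt ?_ i
    exact h
  simpa [pd, smul_eq_mul] using this

lemma pd2_add_const_mul {F G : E → ℝ} {x : E} (hF : ContDiffAt ℝ 2 F x)
    (hG : ∀ y, ContDiffAt ℝ 2 G y) (c : ℝ) (i : Fin n) :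
    pd2 (fun y => F y + c * G y) i i x = pd2 F i i x + c * pd2 G i i x := by
  obtain ⟨u, hu, hcd⟩ := hF.contDiffOn le_rfl (by simp)
  have hio : interior u ∈ 𝓝 x := interior_mem_nhds.mpr hu
  have hev : (fun y => pd (fun z => F z + c * G z) i y)
      =ᶠ[𝓝 x] fun y => pd F i y + c * pd G i y := by
    filter_upwards [hio] with y hy
    have hFy : DifferentiableAt ℝ F y := by
      have : ContDiffAt ℝ 2 F y :=
        (hcd.mono interior_subset).contDiffAt (isOpen_interior.mem_nhds hy)
      exact this.differentiableAt (by norm_num)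
    have hGy := (hG y).differentiableAt (by norm_num)
    exact pd_add_const_mul hFy hGy c i
  have h1 : pd2 (fun y => F y + c * G y) i i x
      = pd (fun y => pd F i y + c * pd G i y) i x := by
    rw [pd2, pd, pd, hev.fderiv_eq]
  rw [h1, pd_add_const_mul (differentiableAt_pd hF i) (differentiableAt_pd (hG x) i) c i]
  rfl

lemma pd_const_mul {G : E → ℝ} {x : E} (hG : DifferentiableAt ℝ G x) (c : ℝ) (i : Fin n) :
    pd (fun y => c * G y) i x = c * pd G i x := by
  have := pd_add_const_mul (F := fun _ => (0:ℝ)) (differentiableAt_const 0) hG c i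
  simpa [pd, fderiv_const] using this

lemma pd2_const_mul {G : E → ℝ} {x : E} (hG : ∀ y, ContDiffAt ℝ 2 G y) (c : ℝ) (i : Fin n) :
    pd2 (fun y => c * G y) i i x = c * pd2 G i i x := by
  have := pd2_add_const_mul (F := fun _ => (0:ℝ)) (x := x) contDiffAt_const hG c i
  simpa [pd2, pd, fderiv_const] using this

/-- second derivative test (necessary direction), 1-D -/
lemma deriv2_nonpos_of_isLocalMax {q : ℝ → ℝ}
    (hq : ∀ᶠ s in 𝓝 (0:ℝ), DifferentiableAt ℝ q s)
    (hq' : DifferentiableAt ℝ (deriv q) 0) (hmax : IsLocalMax q 0) :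
    deriv (deriv q) 0 ≤ 0 := by
  by_contra hpos
  push_neg at hpos
  have hd0 : deriv q 0 = 0 := hmax.deriv_eq_zero
  have hslope : Tendsto (fun s => deriv q s / s) (𝓝[≠] (0:ℝ)) (𝓝 (deriv (deriv q) 0)) := by
    have h1 := hasDerivAt_iff_tendsto_slope.mp hq'.hasDerivAt
    have h2 : (fun s => deriv q s / s) = slope (deriv q) 0 := by
      funext s; rw [slope_def_field, hd0]; ring
    rwa [h2]
  have hev : ∀ᶠ s in 𝓝[≠] (0:ℝ), 0 < deriv q s / s :=
    hslope.eventually (eventually_gt_nhds hpos)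
  have hev' : ∀ᶠ s in 𝓝 (0:ℝ), s ∈ Set.Ioi (0:ℝ) → 0 < deriv q s := by
    have := eventually_nhdsWithin_iff.mp (hev.filter_mono
      (nhdsWithin_mono _ fun s (hs : s ∈ Set.Ioi (0:ℝ)) => ne_of_gt hs))
    filter_upwards [this] with s hs hs'
    have hspos : (0:ℝ) < s := hs'
    have h := hs hs'
    have := mul_pos h hspos
    rwa [div_mul_cancel₀ _ (ne_of_gt hspos)] at this
  obtain ⟨δ₁, hδ₁, hball⟩ := Metric.eventually_nhds_iff.mp ((hq.and hmax).and hev')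
  set δ := δ₁ / 2 with hδdef
  have hδpos : 0 < δ := by positivity
  have hδlt1 : δ < δ₁ := by rw [hδdef]; linarith
  have hcont : ContinuousOn q (Set.Icc 0 δ) := by
    intro s hs
    have hsδ : |s| < δ₁ := by
      rw [abs_lt]; constructor <;> [linarith [hs.1]; linarith [hs.2]]
    exact ((hball (by simpa [Real.dist_eq] using hsδ)).1.1.continuousAt).continuousWithinAt
  have hderiv : ∀ s ∈ Set.Ioo (0:ℝ) δ, HasDerivAt q (deriv q s) s := by
    intro s hs
    have hsδ : |s| < δ₁ := by
      rw [abs_lt]; constructor <;> [linarith [hs.1]; linarith [hs.2]]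
    exact (hball (by simpa [Real.dist_eq] using hsδ)).1.1.hasDerivAt
  obtain ⟨ξ, hξ, hξeq⟩ := exists_hasDerivAt_eq_slope q (deriv q) hδpos hcont hderiv
  have hξball : dist ξ 0 < δ₁ := by
    simp only [Real.dist_eq, sub_zero]
    rw [abs_lt]; constructor <;> [linarith [hξ.1]; linarith [hξ.2]]
  have hξpos : 0 < deriv q ξ := (hball hξball).2 hξ.1
  have hqle : q δ ≤ q 0 := by
    refine (hball ?_).1.2
    simp only [Real.dist_eq, sub_zero]
    rw [abs_lt]; constructor <;> linarith
  rw [hξeq] at hξpos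
  have : (q δ - q 0) / (δ - 0) ≤ 0 := by
    apply div_nonpos_of_nonpos_of_nonneg <;> linarith
  linarith

lemma pd_eq_zero_of_isLocalMax {F : E → ℝ} {x : E} (hmax : IsLocalMax F x) (i : Fin n) :
    pd F i x = 0 := by
  rw [pd, hmax.fderiv_eq_zero]; rfl

lemma pd2_nonpos_of_isLocalMax {F : E → ℝ} {x : E} (hF : ContDiffAt ℝ 2 F x)
    (hmax : IsLocalMax F x) (i : Fin n) : pd2 F i i x ≤ 0 := by
  set e : E := EuclideanSpace.single i (1:ℝ) with he
  set line : ℝ → E := fun s => x + s • e with hlinedef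
  have hline : ∀ s : ℝ, HasDerivAt line e s := by
    intro s
    have h1 : HasDerivAt (fun s : ℝ => s • e) ((1:ℝ) • e) s := (hasDerivAt_id s).smul_const e
    have h2 := h1.const_add x
    rw [one_smul] at h2
    exact h2
  have hline0 : line 0 = x := by simp [hlinedef]
  have hlineCA : ContinuousAt line 0 := (hline 0).continuousAt
  set q : ℝ → ℝ := fun s => F (line s) with hqdef
  obtain ⟨u, hu, hcd⟩ := hF.contDiffOn le_rfl (by simp)
  have hv : interior u ∈ 𝓝 x := interior_mem_nhds.mpr hu
  have hpre : ∀ᶠ s in 𝓝 (0:ℝ), line s ∈ interior u := by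
    have := hlineCA.tendsto
    rw [hline0] at this
    exact this.eventually hv
  have hqd : ∀ᶠ s in 𝓝 (0:ℝ), HasDerivAt q (pd F i (line s)) s := by
    filter_upwards [hpre] with s hs
    have hFy : ContDiffAt ℝ 2 F (line s) :=
      (hcd.mono interior_subset).contDiffAt (isOpen_interior.mem_nhds hs)
    have hd : HasFDerivAt F (fderiv ℝ F (line s)) (line s) :=
      (hFy.differentiableAt (by norm_num)).hasFDerivAt
    exact hd.comp_hasDerivAt s (hline s)
  have hderivq : deriv q =ᶠ[𝓝 (0:ℝ)] fun s => pd F i (line s) := by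
    filter_upwards [hqd] with s hs using hs.deriv
  have hqmax : IsLocalMax q 0 := by
    have := hlineCA.tendsto
    rw [hline0] at this
    have h2 : ∀ᶠ s in 𝓝 (0:ℝ), F (line s) ≤ F x := this.eventually hmax
    filter_upwards [h2] with s hs
    simpa [hqdef, hline0] using hs
  have hpdF : DifferentiableAt ℝ (fun y => pd F i y) x := differentiableAt_pd hF i
  have hcomp : HasDerivAt (fun s => pd F i (line s)) (pd2 F i i x) 0 := by
    have hd : HasFDerivAt (fun y => pd F i y) (fderiv ℝ (fun y => pd F i y) x) (line 0) := by
      rw [hline0]; exact hpdF.hasFDerivAt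
    exact hd.comp_hasDerivAt 0 (hline 0)
  have hq' : DifferentiableAt ℝ (deriv q) 0 :=
    hderivq.differentiableAt_iff.mpr hcomp.differentiableAt
  have hdd : deriv (deriv q) 0 = pd2 F i i x := by
    rw [hderivq.deriv_eq]; exact hcomp.deriv
  rw [← hdd]
  refine deriv2_nonpos_of_isLocalMax ?_ hq' hqmax
  filter_upwards [hqd] with s hs using hs.differentiableAt

lemma hasFDerivAt_coord (f : ℝ → ℝ) {c : ℝ} {x : E} (i : Fin n) (h : HasDerivAt f c (x i)) :
    HasFDerivAt (fun y : E => f (y i)) (c • (EuclideanSpace.proj i : E →L[ℝ] ℝ)) x :=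
  h.comp_hasFDerivAt x (EuclideanSpace.proj (𝕜 := ℝ) i).hasFDerivAt

lemma pd_prod (f : Fin n → ℝ → ℝ) (hf : ∀ j, Differentiable ℝ (f j)) (k : Fin n) (x : E) :
    pd (fun y => ∏ j, f j (y j)) k x
      = deriv (f k) (x k) * ∏ j ∈ Finset.univ.erase k, f j (x j) := by
  classical
  have h : HasFDerivAt (fun y : E => ∏ j, f j (y j))
      (∑ j, (∏ l ∈ Finset.univ.erase j, f l (x l)) •
        ((deriv (f j) (x j)) • (EuclideanSpace.proj j : E →L[ℝ] ℝ))) x := by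
    exact HasFDerivAt.finset_prod fun j _ =>
      hasFDerivAt_coord (f j) j ((hf j) (x j)).hasDerivAt
  rw [pd_of_hasFDerivAt h k]
  rw [ContinuousLinearMap.sum_apply]
  have : ∀ j, ((∏ l ∈ Finset.univ.erase j, f l (x l)) •
        ((deriv (f j) (x j)) • (EuclideanSpace.proj j : E →L[ℝ] ℝ)))
        (EuclideanSpace.single k 1)
      = (if k = j then (deriv (f j) (x j)) * ∏ l ∈ Finset.univ.erase j, f l (x l) else 0) := by
    intro j
    rw [ContinuousLinearMap.smul_apply, ContinuousLinearMap.smul_apply]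
    have : (EuclideanSpace.proj (𝕜 := ℝ) j) (EuclideanSpace.single k (1:ℝ))
        = if k = j then 1 else 0 := by
      simp [EuclideanSpace.single_apply, eq_comm]
    rw [this]
    split <;> simp [smul_eq_mul] <;> ring
  rw [Finset.sum_congr rfl fun j _ => this j]
  simp

lemma pd2_prod (f : Fin n → ℝ → ℝ) (hf : ∀ j, Differentiable ℝ (f j))
    (hf' : ∀ j, Differentiable ℝ (deriv (f j))) (k : Fin n) (x : E) :
    pd2 (fun y => ∏ j, f j (y j)) k k x
      = deriv (deriv (f k)) (x k) * ∏ j ∈ Finset.univ.erase k, f j (x j) := by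
  classical
  set g := Function.update f k (deriv (f k)) with hg
  have hgd : ∀ j, Differentiable ℝ (g j) := by
    intro j
    by_cases hj : j = k
    · subst hj; simpa [hg] using hf' j
    · simpa [hg, Function.update_of_ne hj] using hf j
  have hprodg : ∀ y : E, (∏ j, g j (y j))
      = deriv (f k) (y k) * ∏ j ∈ Finset.univ.erase k, f j (y j) := by
    intro y
    rw [← Finset.mul_prod_erase Finset.univ (fun j => g j (y j)) (Finset.mem_univ k)]
    congr 1
    · simp [hg]
    · exact Finset.prod_congr rfl fun j hj => by
        rw [hg, Function.update_of_ne (Finset.ne_of_mem_erase hj)]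
  have hfun : (fun y : E => pd (fun z => ∏ j, f j (z j)) k y)
      = fun y => ∏ j, g j (y j) := by
    funext y
    rw [pd_prod f hf k y, hprodg y]
  have hgk : ∀ j, g j = if j = k then deriv (f k) else f j := by
    intro j; by_cases hj : j = k
    · subst hj; simp [hg]
    · simp [hg, Function.update_of_ne hj, hj]
  rw [pd2, hfun, pd_prod g hgd k x]
  congr 1
  · rw [hgk k]; simp
  · exact Finset.prod_congr rfl fun j hj => by
      rw [hgk j, if_neg (Finset.ne_of_mem_erase hj)]

section OneDim

variable (β γ θ : ℝ)

lemma hasDerivAt_lin (s : ℝ) : HasDerivAt (fun s : ℝ => γ * s + θ) γ s := by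
  simpa using ((hasDerivAt_id s).const_mul γ).add_const θ

lemma hasDerivAt_expsin (s : ℝ) :
    HasDerivAt (fun s => Real.exp (β * s) * Real.sin (γ * s + θ))
      (Real.exp (β * s) * (β * Real.sin (γ * s + θ) + γ * Real.cos (γ * s + θ))) s := by
  have he : HasDerivAt (fun s : ℝ => Real.exp (β * s)) (Real.exp (β * s) * β) s :=
    (Real.hasDerivAt_exp (β * s)).comp s (by simpa using (hasDerivAt_id s).const_mul β)
  have hs : HasDerivAt (fun s : ℝ => Real.sin (γ * s + θ)) (Real.cos (γ * s + θ) * γ) s :=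
    by have h := (Real.hasDerivAt_sin (γ * s + θ)).comp s (hasDerivAt_lin γ θ s); exact h
  have := he.mul hs
  exact this.congr_deriv (by ring)

lemma hasDerivAt_expsin' (s : ℝ) :
    HasDerivAt (fun s => Real.exp (β * s) * (β * Real.sin (γ * s + θ) + γ * Real.cos (γ * s + θ)))
      (Real.exp (β * s) * ((β ^ 2 - γ ^ 2) * Real.sin (γ * s + θ)
        + 2 * β * γ * Real.cos (γ * s + θ))) s := by
  have he : HasDerivAt (fun s : ℝ => Real.exp (β * s)) (Real.exp (β * s) * β) s :=
    (Real.hasDerivAt_exp (β * s)).comp s (by simpa using (hasDerivAt_id s).const_mul β)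
  have hs : HasDerivAt (fun s : ℝ => Real.sin (γ * s + θ)) (Real.cos (γ * s + θ) * γ) s :=
    by have h := (Real.hasDerivAt_sin (γ * s + θ)).comp s (hasDerivAt_lin γ θ s); exact h
  have hc : HasDerivAt (fun s : ℝ => Real.cos (γ * s + θ)) (-Real.sin (γ * s + θ) * γ) s :=
    by have h := (Real.hasDerivAt_cos (γ * s + θ)).comp s (hasDerivAt_lin γ θ s); exact h
  have := he.mul ((hs.const_mul β).add (hc.const_mul γ))
  exact this.congr_deriv (by simp only [Pi.add_apply]; ring)

lemma deriv_expsin :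
    deriv (fun s => Real.exp (β * s) * Real.sin (γ * s + θ))
      = fun s => Real.exp (β * s) * (β * Real.sin (γ * s + θ) + γ * Real.cos (γ * s + θ)) :=
  funext fun s => (hasDerivAt_expsin β γ θ s).deriv

lemma deriv2_expsin :
    deriv (deriv (fun s => Real.exp (β * s) * Real.sin (γ * s + θ)))
      = fun s => Real.exp (β * s) * ((β ^ 2 - γ ^ 2) * Real.sin (γ * s + θ)
        + 2 * β * γ * Real.cos (γ * s + θ)) := by
  rw [deriv_expsin]
  exact funext fun s => (hasDerivAt_expsin' β γ θ s).deriv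

lemma differentiable_expsin :
    Differentiable ℝ (fun s => Real.exp (β * s) * Real.sin (γ * s + θ)) :=
  fun s => (hasDerivAt_expsin β γ θ s).differentiableAt

lemma differentiable_deriv_expsin :
    Differentiable ℝ (deriv (fun s => Real.exp (β * s) * Real.sin (γ * s + θ))) := by
  rw [deriv_expsin]
  exact fun s => (hasDerivAt_expsin' β γ θ s).differentiableAt

lemma contDiff_expsin :
    ContDiff ℝ 2 (fun s => Real.exp (β * s) * Real.sin (γ * s + θ)) := by
  have h1 : ContDiff ℝ 2 (fun s : ℝ => β * s) := contDiff_const.mul contDiff_id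
  have h2 : ContDiff ℝ 2 (fun s : ℝ => γ * s + θ) :=
    (contDiff_const.mul contDiff_id).add contDiff_const
  exact (Real.contDiff_exp.comp h1).mul (Real.contDiff_sin.comp h2)

end OneDim

lemma contDiff_prod_coord (f : Fin n → ℝ → ℝ) (hf : ∀ i, ContDiff ℝ 2 (f i)) :
    ContDiff ℝ 2 (fun y : E => ∏ j, f j (y j)) := by
  apply contDiff_prod (t := Finset.univ) (f := fun i (x : E) => f i (x i))
  intro i _
  exact (hf i).comp (EuclideanSpace.proj (𝕜 := ℝ) i).contDiff

lemma comparison {Ω : Set (EuclideanSpace ℝ (Fin n))} {d : ℝ}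
    {a : EuclideanSpace ℝ (Fin n)} {f g : ℝ → ℝ} {f'0 : ℝ} (hd : 0 < d)
    (hΩo : IsOpen Ω) (hΩc : IsCompact (closure Ω)) (hΩne : Ω.Nonempty)
    (hfle : ∀ N : ℝ, 0 ≤ N → f N ≤ f'0 * N)
    (sol : ImpSol n Ω d (fun _ => a) f g) (m : ℕ)
    (Ψ : EuclideanSpace ℝ (Fin n) → ℝ) (μ : ℝ)
    (hΨ2 : ∀ x, ContDiffAt ℝ 2 Ψ x)
    (hΨpos : ∀ x ∈ closure Ω, 0 ≤ Ψ x)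
    (hPDE : ∀ x, d * lap Ψ x - (∑ i, a i * pd Ψ i x) + f'0 * Ψ x = μ * Ψ x)
    (hinit : ∀ x ∈ Ω, g (sol.N m x) ≤ Ψ x) :
    ∀ x ∈ closure Ω, ∀ t ∈ Set.Icc (0:ℝ) 1, sol.u m x t ≤ Real.exp (μ * t) * Ψ x := by
  classical
  set U := sol.u m with hU
  set V : E × ℝ → ℝ := fun p =>
    Real.exp (-((f'0 + 1) * p.2)) * (U p.1 p.2 - Real.exp (μ * p.2) * Ψ p.1) with hV
  set K : Set (E × ℝ) := (closure Ω) ×ˢ Set.Icc (0:ℝ) 1 with hK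
  have hKc : IsCompact K := hΩc.prod isCompact_Icc
  obtain ⟨xc, hxc⟩ := hΩne
  have hKne : K.Nonempty := ⟨(xc, 0), by
    rw [hK]; exact Set.mk_mem_prod (subset_closure hxc) (by norm_num)⟩
  have hΨcont : Continuous Ψ := continuous_iff_continuousAt.mpr fun x => (hΨ2 x).continuousAt
  have hVcont : ContinuousOn V K := by
    rw [hV, hK]
    apply ContinuousOn.mul
    · exact (Real.continuous_exp.comp (continuous_const.mul continuous_snd).neg).continuousOn
    · exact (sol.u_cont m).sub
        ((Real.continuous_exp.comp (continuous_const.mul continuous_snd)).mul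
          (hΨcont.comp continuous_fst)).continuousOn
  obtain ⟨p₀, hp₀, hmax'⟩ := hKc.exists_isMaxOn hKne hVcont
  have hmax : ∀ p ∈ K, V p ≤ V p₀ := fun p hp => hmax' hp
  obtain ⟨x₀, t₀⟩ := p₀
  rw [hK, Set.mem_prod] at hp₀
  obtain ⟨hx₀, ht₀⟩ := hp₀
  suffices hV0 : V (x₀, t₀) ≤ 0 by
    intro x hx t ht
    have h1 : V (x, t) ≤ 0 := le_trans (hmax (x, t) (by rw [hK]; exact Set.mk_mem_prod hx ht)) hV0
    rw [hV] at h1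
    simp only at h1
    have h2 := Real.exp_pos (-((f'0 + 1) * t))
    nlinarith
  by_contra hpos0
  push_neg at hpos0
  -- case t₀ = 0
  rcases eq_or_lt_of_le ht₀.1 with h0 | htpos
  · have hWc : ContinuousOn (fun x => V (x, (0:ℝ))) (closure Ω) := by
      apply hVcont.comp (Continuous.continuousOn (by continuity))
      intro x hx
      rw [hK]; exact Set.mk_mem_prod hx (by norm_num)
    have hΩsub : Ω ⊆ closure Ω ∩ (fun x => V (x, (0:ℝ))) ⁻¹' Set.Iic 0 := by
      intro x hx
      refine ⟨subset_closure hx, ?_⟩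
      have hu0 : U x 0 = g (sol.N m x) := sol.init m x hx
      show V (x, 0) ≤ 0
      rw [hV]
      simp only [mul_zero, neg_zero, Real.exp_zero, one_mul]
      rw [hu0]
      linarith [hinit x hx]
    have hclosed : IsClosed (closure Ω ∩ (fun x => V (x, (0:ℝ))) ⁻¹' Set.Iic 0) :=
      hWc.preimage_isClosed_of_isClosed isClosed_closure isClosed_Iic
    have hx₀V : V (x₀, 0) ≤ 0 := ((closure_minimal hΩsub hclosed) hx₀).2
    have h0' : t₀ = 0 := by simpa using h0.symm
    rw [h0'] at hpos0
    linarith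
  have ht01 : t₀ ∈ Set.Ioc (0:ℝ) 1 := ⟨htpos, ht₀.2⟩
  by_cases hxΩ : x₀ ∈ Ω
  swap
  · -- boundary case
    have hfr : x₀ ∈ frontier Ω := by
      rw [hΩo.frontier_eq]; exact ⟨hx₀, hxΩ⟩
    have hu0 : U x₀ t₀ = 0 := sol.bdry m x₀ hfr t₀ ht01
    have h1 : 0 ≤ Real.exp (μ * t₀) * Ψ x₀ :=
      mul_nonneg (Real.exp_pos _).le (hΨpos x₀ hx₀)
    have h2 := Real.exp_pos (-((f'0 + 1) * t₀))
    rw [hV] at hpos0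
    simp only at hpos0
    rw [hu0] at hpos0
    nlinarith
  · -- interior case
    have hC2 : ContDiffAt ℝ 2 (fun y => U y t₀) x₀ := sol.u_space_C2 m t₀ ht01 x₀ hxΩ
    have hC1t : ContDiffAt ℝ 1 (fun s => U x₀ s) t₀ := sol.u_time_C1 m x₀ hxΩ t₀ ht01
    set c := Real.exp (μ * t₀) with hc
    set G : E → ℝ := fun y => U y t₀ - c * Ψ y with hG
    have hPpos : (0:ℝ) < Real.exp (-((f'0 + 1) * t₀)) := Real.exp_pos _
    have hGmax : IsLocalMax G x₀ := by
      filter_upwards [hΩo.mem_nhds hxΩ] with y hy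
      have h1 : V (y, t₀) ≤ V (x₀, t₀) :=
        hmax (y, t₀) (by rw [hK]; exact Set.mk_mem_prod (subset_closure hy) ht₀)
      rw [hV] at h1
      simp only at h1
      show G y ≤ G x₀
      rw [hG]
      simp only
      rw [hc]
      nlinarith
    have hGc2 : ContDiffAt ℝ 2 G x₀ := by
      rw [hG]; exact hC2.sub (contDiffAt_const.mul (hΨ2 x₀))
    have hpdG : ∀ i, pd G i x₀ = 0 := fun i => pd_eq_zero_of_isLocalMax hGmax i
    have hpd2G : ∀ i, pd2 G i i x₀ ≤ 0 := fun i => pd2_nonpos_of_isLocalMax hGc2 hGmax i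
    have hUeq : (fun y => U y t₀) = fun y => G y + c * Ψ y := by
      funext y; rw [hG]; ring
    have hpdU : ∀ i, pd (fun y => U y t₀) i x₀ = c * pd Ψ i x₀ := by
      intro i
      rw [hUeq, pd_add_const_mul (hGc2.differentiableAt (by norm_num))
        ((hΨ2 x₀).differentiableAt (by norm_num)) c i, hpdG i, zero_add]
    have hpd2U : ∀ i, pd2 (fun y => U y t₀) i i x₀ ≤ c * pd2 Ψ i i x₀ := by
      intro i
      rw [hUeq, pd2_add_const_mul hGc2 hΨ2 c i]
      linarith [hpd2G i]
    have hlapU : lap (fun y => U y t₀) x₀ ≤ c * lap Ψ x₀ := by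
      rw [lap, lap, Finset.mul_sum]
      exact Finset.sum_le_sum fun i _ => hpd2U i
    -- time derivative
    have hUtd : HasDerivAt (fun s => U x₀ s) (deriv (fun s => U x₀ s) t₀) t₀ :=
      (hC1t.differentiableAt (by norm_num)).hasDerivAt
    set Ut := deriv (fun s => U x₀ s) t₀ with hUt
    set q : ℝ → ℝ := fun s =>
      Real.exp (-((f'0 + 1) * s)) * (U x₀ s - Real.exp (μ * s) * Ψ x₀) with hq
    have hqV : ∀ s, q s = V (x₀, s) := by intro s; rw [hq, hV]
    set D : ℝ := (-(f'0 + 1)) * Real.exp (-((f'0 + 1) * t₀)) * (U x₀ t₀ - c * Ψ x₀)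
      + Real.exp (-((f'0 + 1) * t₀)) * (Ut - μ * c * Ψ x₀) with hD
    have hqd : HasDerivAt q D t₀ := by
      have h1 : HasDerivAt (fun s : ℝ => Real.exp (-((f'0 + 1) * s)))
          ((-(f'0 + 1)) * Real.exp (-((f'0 + 1) * t₀))) t₀ := by
        have hin : HasDerivAt (fun s : ℝ => -((f'0 + 1) * s)) (-(f'0 + 1)) t₀ := by
          exact ((hasDerivAt_id t₀).const_mul (f'0 + 1)).neg.congr_deriv (by ring)
        have := (Real.hasDerivAt_exp (-((f'0 + 1) * t₀))).comp t₀ hin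
        exact this.congr_deriv (by ring)
      have h2 : HasDerivAt (fun s : ℝ => Real.exp (μ * s) * Ψ x₀)
          (μ * c * Ψ x₀) t₀ := by
        have hin : HasDerivAt (fun s : ℝ => μ * s) μ t₀ := by
          simpa using (hasDerivAt_id t₀).const_mul μ
        have := ((Real.hasDerivAt_exp (μ * t₀)).comp t₀ hin).mul_const (Ψ x₀)
        exact this.congr_deriv (by rw [hc]; ring)
      have := h1.mul (hUtd.sub h2)
      rw [hq, hD]
      exact this.congr_deriv rfl

    have hD0 : 0 ≤ D := by
      rcases lt_or_eq_of_le ht₀.2 with ht1 | ht1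
      · -- t₀ < 1 : local max, deriv zero
        have hloc : IsLocalMax q t₀ := by
          filter_upwards [Icc_mem_nhds htpos ht1] with s hs
          rw [hqV s, hqV t₀]
          exact hmax (x₀, s) (by rw [hK]; exact Set.mk_mem_prod hx₀ hs)
        have := hloc.deriv_eq_zero
        rw [hqd.deriv] at this
        linarith
      · -- t₀ = 1 : one-sided
        have hslope := hasDerivAt_iff_tendsto_slope.mp hqd
        have hmono : 𝓝[<] t₀ ≤ 𝓝[≠] t₀ := nhdsWithin_mono _ fun s hs => ne_of_lt hs
        have hev : ∀ᶠ s in 𝓝[<] t₀, 0 ≤ slope q t₀ s := by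
          filter_upwards [Ioo_mem_nhdsLT_of_mem (Set.mem_Ioc.mpr ⟨htpos, le_rfl⟩)] with s hs
          have hqs : q s ≤ q t₀ := by
            rw [hqV s, hqV t₀]
            exact hmax (x₀, s) (by
              rw [hK]
              exact Set.mk_mem_prod hx₀ ⟨hs.1.le, by linarith [hs.2]⟩)
          rw [slope_def_field]
          apply div_nonneg_of_nonpos <;> linarith [hs.2]
        exact ge_of_tendsto (hslope.mono_left hmono) hev
    -- PDE inequality
    have hpde := sol.pde m x₀ hxΩ t₀ ht01
    have hfU : f (U x₀ t₀) ≤ f'0 * U x₀ t₀ :=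
      hfle _ (sol.u_nonneg m x₀ hx₀ t₀ ht₀)
    have hsum_eq : (∑ i, a i * pd (fun y => U y t₀) i x₀) = c * ∑ i, a i * pd Ψ i x₀ := by
      rw [Finset.mul_sum]
      exact Finset.sum_congr rfl fun i _ => by rw [hpdU i]; ring
    have hUt_le : Ut ≤ c * (μ - f'0) * Ψ x₀ + f'0 * U x₀ t₀ := by
      have hΨeq := hPDE x₀
      have hstep : Ut ≤ d * (c * lap Ψ x₀) - c * (∑ i, a i * pd Ψ i x₀) + f'0 * U x₀ t₀ := by
        rw [hUt, hpde, hsum_eq]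
        have hd' : d * lap (fun y => U y t₀) x₀ ≤ d * (c * lap Ψ x₀) :=
          mul_le_mul_of_nonneg_left hlapU hd.le
        linarith
      have hfin : d * (c * lap Ψ x₀) - c * (∑ i, a i * pd Ψ i x₀)
          = c * (μ - f'0) * Ψ x₀ := by
        linear_combination c * hΨeq
      linarith
    -- contradiction
    have hUgt : c * Ψ x₀ < U x₀ t₀ := by
      rw [hV] at hpos0
      simp only at hpos0
      rw [← hc] at hpos0
      nlinarith
    have hinner : 0 ≤ (-(f'0 + 1)) * (U x₀ t₀ - c * Ψ x₀) + (Ut - μ * c * Ψ x₀) := by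
      have hrw : D = Real.exp (-((f'0 + 1) * t₀)) *
          ((-(f'0 + 1)) * (U x₀ t₀ - c * Ψ x₀) + (Ut - μ * c * Ψ x₀)) := by
        rw [hD]; ring
      rw [hrw] at hD0
      exact (mul_nonneg_iff_of_pos_left hPpos).mp hD0
    nlinarith [hinner, hUt_le, hUgt]

set_option maxHeartbeats 1600000 in
/-- Extinction on a hyperrectangle when the sum `∑ 1/Lᵢ²` lies above the critical
threshold. -/
theorem hyperrectangle_extinction
    (n : ℕ) (hn : 1 ≤ n) (d : ℝ) (hd : 0 < d)
    (a : EuclideanSpace ℝ (Fin n)) (L : Fin n → ℝ) (hL : ∀ i, 0 < L i)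
    (Ω : Set (EuclideanSpace ℝ (Fin n)))
    (hΩ : Ω = {x | ∀ i, x i ∈ Set.Ioo 0 (L i)})
    (f g : ℝ → ℝ) (f'0 g'0 : ℝ) (hf : SatF f f'0) (hg : SatGext g g'0)
    (hsum : 1 / (d * Real.pi ^ 2) * (f'0 + Real.log g'0 - ‖a‖ ^ 2 / (4 * d))
      < ∑ i, 1 / L i ^ 2)
    (sol : ImpSol n Ω d (fun _ => a) f g) :
    ∀ x ∈ Ω, Tendsto (fun m => sol.N m x) atTop (𝓝 0) := by
  classical
  obtain ⟨-, -, -, -, hh⟩ := hf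
  obtain ⟨hflin⟩ : ∃ _ : (∀ N : ℝ, 0 ≤ N → f N ≤ f'0 * N), True := by
    obtain ⟨h, -, -, -, hb⟩ := hh
    exact ⟨fun N hN => (hb N hN).2, trivial⟩
  obtain ⟨hgc, hg0, hgpos, hgd, hg'0pos, hglin⟩ := hg
  -- Ω is open
  have hproj_cont : ∀ i : Fin n, Continuous fun x : EuclideanSpace ℝ (Fin n) => x i :=
    fun i => (EuclideanSpace.proj (𝕜 := ℝ) i).continuous
  have hΩo : IsOpen Ω := by
    rw [hΩ]
    have hset : {x : EuclideanSpace ℝ (Fin n) | ∀ i, x i ∈ Set.Ioo 0 (L i)}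
        = ⋂ i, (fun x : EuclideanSpace ℝ (Fin n) => x i) ⁻¹' Set.Ioo 0 (L i) := by
      ext x; simp
    rw [hset]
    exact isOpen_iInter_of_finite fun i => isOpen_Ioo.preimage (hproj_cont i)
  -- closure Ω sits inside the compact box C
  set C : Set (EuclideanSpace ℝ (Fin n)) := {x | ∀ i, x i ∈ Set.Icc 0 (L i)} with hCdef
  have hCclosed : IsClosed C := by
    have hset : C = ⋂ i, (fun x : EuclideanSpace ℝ (Fin n) => x i) ⁻¹' Set.Icc 0 (L i) := by
      ext x; simp [hCdef]
    rw [hset]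
    exact isClosed_iInter fun i => isClosed_Icc.preimage (hproj_cont i)
  have hsubC : closure Ω ⊆ C := by
    apply closure_minimal _ hCclosed
    rw [hΩ]
    intro x hx i
    exact ⟨(hx i).1.le, (hx i).2.le⟩
  have hCbdd : Bornology.IsBounded C := by
    rw [Metric.isBounded_iff_subset_closedBall 0]
    refine ⟨Real.sqrt (∑ i, (L i)^2), fun x hx => ?_⟩
    rw [Metric.mem_closedBall, dist_zero_right, EuclideanSpace.norm_eq]
    apply Real.sqrt_le_sqrt
    apply Finset.sum_le_sum
    intro i _
    have h1 := (hx i).1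
    have h2 := (hx i).2
    rw [Real.norm_eq_abs, sq_abs]
    nlinarith
  have hclc : IsCompact (closure Ω) :=
    (Metric.isCompact_of_isClosed_isBounded hCclosed hCbdd).of_isClosed_subset
      isClosed_closure hsubC
  -- Ω is nonempty
  set xc : EuclideanSpace ℝ (Fin n) := (WithLp.equiv 2 (Fin n → ℝ)).symm (fun i => L i / 2)
    with hxcdef
  have hxc : xc ∈ Ω := by
    rw [hΩ]
    intro i
    have : xc i = L i / 2 := by rw [hxcdef]; rfl
    rw [this]
    constructor
    · linarith [hL i]
    · linarith [hL i]
  have hΩne : Ω.Nonempty := ⟨xc, hxc⟩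
  -- choice of ε
  set θc : ℝ := f'0 + Real.log g'0 - ‖a‖ ^ 2 / (4 * d) with hθcdef
  have hpi := Real.pi_pos
  have hdp : (0:ℝ) < d * Real.pi ^ 2 := by positivity
  have hθ0 : θc < d * Real.pi ^ 2 * ∑ i, 1 / L i ^ 2 := by
    have h1 := (mul_lt_mul_iff_right₀ hdp).mpr hsum
    have h2 : d * Real.pi ^ 2 * (1 / (d * Real.pi ^ 2) * θc) = θc := by
      field_simp
    rw [hθcdef] at h2 ⊢
    linarith [h1, h2.symm.le, h2.le]
  have hcontε : ContinuousAt (fun ε : ℝ => d * Real.pi ^ 2 * ∑ i, 1 / (L i + 2 * ε) ^ 2) 0 := by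
    apply ContinuousAt.mul continuousAt_const
    apply tendsto_finset_sum
    intro i _
    apply ContinuousAt.div continuousAt_const
    · exact ((continuousAt_const.add (continuousAt_const.mul continuousAt_id)).pow 2)
    · have := hL i
      simp only [mul_zero, add_zero]
      positivity
  have hval0 : (fun ε : ℝ => d * Real.pi ^ 2 * ∑ i, 1 / (L i + 2 * ε) ^ 2) 0
      = d * Real.pi ^ 2 * ∑ i, 1 / L i ^ 2 := by
    norm_num
  have hev : ∀ᶠ ε in 𝓝 (0:ℝ), θc < d * Real.pi ^ 2 * ∑ i, 1 / (L i + 2 * ε) ^ 2 := by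
    refine hcontε.eventually_const_lt ?_
    rw [hval0]; exact hθ0
  have hev' : ∀ᶠ ε in 𝓝[>] (0:ℝ), θc < d * Real.pi ^ 2 * ∑ i, 1 / (L i + 2 * ε) ^ 2 :=
    hev.filter_mono (nhdsWithin_le_nhds (s := Set.Ioi (0:ℝ)))
  obtain ⟨ε, hε1, hε2⟩ := (hev'.and self_mem_nhdsWithin).exists
  have hεpos : (0:ℝ) < ε := hε2
  have hLε : ∀ i, (0:ℝ) < L i + 2 * ε := fun i => by linarith [hL i, hεpos]
  -- the one-dimensional factors
  set b : Fin n → ℝ := fun i => a i / (2 * d) with hbdef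
  set γ : Fin n → ℝ := fun i => Real.pi / (L i + 2 * ε) with hγdef
  have hεpos' := hεpos
  have hγpos : ∀ i, 0 < γ i := fun i => by
    simp only [hγdef]; exact div_pos hpi (hLε i)
  set qf : Fin n → ℝ → ℝ := fun i s => Real.exp (b i * s) * Real.sin (γ i * s + γ i * ε)
    with hqfdef
  have hqf : ∀ i, qf i = fun s => Real.exp (b i * s) * Real.sin (γ i * s + γ i * ε) :=
    fun i => by rw [hqfdef]
  have hqd : ∀ i, Differentiable ℝ (qf i) := fun i => by
    rw [hqf i]; exact differentiable_expsin (b i) (γ i) (γ i * ε)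
  have hqd' : ∀ i, Differentiable ℝ (deriv (qf i)) := fun i => by
    rw [hqf i]; exact differentiable_deriv_expsin (b i) (γ i) (γ i * ε)
  set ν : Fin n → ℝ := fun i => -((a i) ^ 2 / (4 * d) + d * (γ i) ^ 2) with hνdef
  have hode : ∀ k (s : ℝ), d * deriv (deriv (qf k)) s - a k * deriv (qf k) s = ν k * qf k s := by
    intro k s
    rw [hqf k, deriv2_expsin (b k) (γ k) (γ k * ε), deriv_expsin (b k) (γ k) (γ k * ε)]
    simp only [hνdef, hbdef]
    field_simp
    ring
  set Φb : EuclideanSpace ℝ (Fin n) → ℝ := fun y => ∏ j, qf j (y j) with hΦbdef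
  have hΦb2 : ∀ x, ContDiffAt ℝ 2 Φb x := by
    have h : ContDiff ℝ 2 Φb := by
      rw [hΦbdef]
      refine contDiff_prod_coord qf fun i => ?_
      rw [hqf i]; exact contDiff_expsin (b i) (γ i) (γ i * ε)
    exact fun x => h.contDiffAt
  have hΦbcont : Continuous Φb := continuous_iff_continuousAt.mpr fun x => (hΦb2 x).continuousAt
  -- PDE identity for Φb
  set μb : ℝ := f'0 + ∑ k, ν k with hμbdef
  have hΦpde : ∀ x, d * lap Φb x - (∑ i, a i * pd Φb i x) + f'0 * Φb x = μb * Φb x := by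
    intro x
    have hlapb : lap Φb x
        = ∑ k, deriv (deriv (qf k)) (x k) * ∏ j ∈ Finset.univ.erase k, qf j (x j) := by
      have h1 : lap Φb x = ∑ k, pd2 Φb k k x := rfl
      rw [h1]
      exact Finset.sum_congr rfl fun k _ => by rw [hΦbdef]; exact pd2_prod qf hqd hqd' k x
    have hpdb : ∀ i, pd Φb i x
        = deriv (qf i) (x i) * ∏ j ∈ Finset.univ.erase i, qf j (x j) := by
      intro i; rw [hΦbdef]; exact pd_prod qf hqd i x
    have hterm : ∀ k, qf k (x k) * ∏ j ∈ Finset.univ.erase k, qf j (x j) = Φb x := by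
      intro k
      rw [hΦbdef]
      exact Finset.mul_prod_erase Finset.univ (fun j => qf j (x j)) (Finset.mem_univ k)
    have hsum1 : (∑ i, a i * pd Φb i x)
        = ∑ i, a i * (deriv (qf i) (x i) * ∏ j ∈ Finset.univ.erase i, qf j (x j)) :=
      Finset.sum_congr rfl fun i _ => by rw [hpdb i]
    rw [hlapb, hsum1, Finset.mul_sum, ← Finset.sum_sub_distrib]
    have hterm2 : ∀ k ∈ Finset.univ,
        d * (deriv (deriv (qf k)) (x k) * ∏ j ∈ Finset.univ.erase k, qf j (x j))
          - a k * (deriv (qf k) (x k) * ∏ j ∈ Finset.univ.erase k, qf j (x j))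
        = ν k * Φb x := by
      intro k _
      have h1 := hode k (x k)
      calc d * (deriv (deriv (qf k)) (x k) * ∏ j ∈ Finset.univ.erase k, qf j (x j))
          - a k * (deriv (qf k) (x k) * ∏ j ∈ Finset.univ.erase k, qf j (x j))
          = (d * deriv (deriv (qf k)) (x k) - a k * deriv (qf k) (x k))
            * ∏ j ∈ Finset.univ.erase k, qf j (x j) := by ring
        _ = ν k * (qf k (x k) * ∏ j ∈ Finset.univ.erase k, qf j (x j)) := by
            rw [h1]; ring
        _ = ν k * Φb x := by rw [hterm k]
    rw [Finset.sum_congr rfl hterm2, ← Finset.sum_mul, hμbdef]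
    ring
  -- positivity of Φb on the closed box
  have hqpos : ∀ i, ∀ s : ℝ, 0 ≤ s → s ≤ L i → 0 < qf i s := by
    intro i s hs0 hsL
    rw [hqf i]
    apply mul_pos (Real.exp_pos _)
    apply Real.sin_pos_of_pos_of_lt_pi
    · have := hγpos i; nlinarith
    · have harg : γ i * s + γ i * ε = γ i * (s + ε) := by ring
      have hπeq : γ i * (L i + 2 * ε) = Real.pi := by
        simp only [hγdef]
        exact div_mul_cancel₀ Real.pi (ne_of_gt (hLε i))
      have hlt : γ i * (s + ε) < γ i * (L i + 2 * ε) := by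
        apply mul_lt_mul_of_pos_left _ (hγpos i)
        linarith
      rw [harg, ← hπeq]
      exact hlt
  have hΦbpos : ∀ x ∈ closure Ω, 0 < Φb x := by
    intro x hx
    rw [hΦbdef]
    apply Finset.prod_pos
    intro i _
    have hxi := hsubC hx i
    exact hqpos i (x i) hxi.1 hxi.2
  -- minimum of Φb on closure Ω
  obtain ⟨z, hzcl, hminz⟩ := hclc.exists_isMinOn ⟨xc, subset_closure hxc⟩ hΦbcont.continuousOn
  set δ : ℝ := Φb z with hδdef
  have hδpos : 0 < δ := hΦbpos z hzcl
  have hδle : ∀ x ∈ closure Ω, δ ≤ Φb x := fun x hx => hminz hx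
  -- maximum of N 0 on closure Ω
  obtain ⟨z0, hz0cl, hmax0⟩ := hclc.exists_isMaxOn ⟨xc, subset_closure hxc⟩ (sol.N_cont 0)
  set M₀ : ℝ := sol.N 0 z0 with hM₀def
  have hM₀nonneg : 0 ≤ M₀ := sol.N_nonneg 0 z0 hz0cl
  set C₀ : ℝ := M₀ / δ with hC₀def
  have hC₀nonneg : 0 ≤ C₀ := div_nonneg hM₀nonneg hδpos.le
  set ρ : ℝ := g'0 * Real.exp μb with hρdef
  have hρ0 : 0 < ρ := mul_pos hg'0pos (Real.exp_pos _)
  -- ρ < 1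
  have hnormsq : ‖a‖ ^ 2 = ∑ i, (a i) ^ 2 := by
    rw [EuclideanSpace.norm_eq, Real.sq_sqrt]
    · exact Finset.sum_congr rfl fun i _ => by rw [Real.norm_eq_abs, sq_abs]
    · exact Finset.sum_nonneg fun i _ => sq_nonneg _
  have hρ1 : ρ < 1 := by
    have hlogμ : Real.log g'0 + μb < 0 := by
      have hγsq : ∀ i, (γ i) ^ 2 = Real.pi ^ 2 * (1 / (L i + 2 * ε) ^ 2) := by
        intro i
        simp only [hγdef]
        rw [div_pow, mul_one_div]
      have hsumν : ∑ k, ν k = -(∑ k, (a k) ^ 2 / (4 * d))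
          - d * Real.pi ^ 2 * ∑ k, 1 / (L k + 2 * ε) ^ 2 := by
        have h1 : ∀ k ∈ Finset.univ, ν k
            = -((a k) ^ 2 / (4 * d)) - d * Real.pi ^ 2 * (1 / (L k + 2 * ε) ^ 2) := by
          intro k _
          simp only [hνdef]
          rw [hγsq k]; ring
        rw [Finset.sum_congr rfl h1, Finset.sum_sub_distrib, ← Finset.sum_neg_distrib,
          ← Finset.mul_sum]
      have hnorm2 : ‖a‖ ^ 2 / (4 * d) = ∑ k, (a k) ^ 2 / (4 * d) := by
        rw [hnormsq, Finset.sum_div]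
      rw [hμbdef, hsumν]
      rw [hθcdef] at hε1
      rw [hnorm2] at hε1
      linarith
    rw [hρdef]
    calc g'0 * Real.exp μb = Real.exp (Real.log g'0 + μb) := by
          have h2 := Real.exp_add (Real.log g'0) μb
          rw [Real.exp_log hg'0pos] at h2
          exact h2.symm
      _ < Real.exp 0 := Real.exp_lt_exp.mpr hlogμ
      _ = 1 := Real.exp_zero
  -- the key induction
  have hkey : ∀ m, ∀ x ∈ closure Ω, sol.N m x ≤ C₀ * ρ ^ m * Φb x := by
    intro m
    induction m with
    | zero =>
      intro x hx
      have h1 : sol.N 0 x ≤ M₀ := hmax0 hx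
      have h2 : M₀ = C₀ * δ := by
        rw [hC₀def, div_mul_cancel₀]
        exact ne_of_gt hδpos
      have h3 : C₀ * δ ≤ C₀ * Φb x := mul_le_mul_of_nonneg_left (hδle x hx) hC₀nonneg
      simpa using le_trans h1 (le_trans h2.le h3)
    | succ m ih =>
      intro x hx
      set A : ℝ := g'0 * (C₀ * ρ ^ m) with hAdef
      have hAnonneg : 0 ≤ A := by
        rw [hAdef]; positivity
      have hcomp := comparison hd hΩo hclc hΩne hflin sol m
        (fun y => A * Φb y) μb
        (fun x => contDiffAt_const.mul (hΦb2 x))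
        (fun x hx => mul_nonneg hAnonneg (hΦbpos x hx).le)
        (by
          intro x
          have hbase := hΦpde x
          have hlapA : lap (fun y => A * Φb y) x = A * lap Φb x := by
            have h1 : lap (fun y => A * Φb y) x = ∑ i, pd2 (fun y => A * Φb y) i i x := rfl
            have h2 : lap Φb x = ∑ i, pd2 Φb i i x := rfl
            rw [h1, h2, Finset.mul_sum]
            exact Finset.sum_congr rfl fun i _ => pd2_const_mul hΦb2 A i
          have hpdA : ∀ i, pd (fun y => A * Φb y) i x = A * pd Φb i x := fun i =>
            pd_const_mul ((hΦb2 x).differentiableAt (by norm_num)) A i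
          have hsumA : (∑ i, a i * pd (fun y => A * Φb y) i x)
              = A * ∑ i, a i * pd Φb i x := by
            rw [Finset.mul_sum]
            exact Finset.sum_congr rfl fun i _ => by rw [hpdA i]; ring
          rw [hlapA, hsumA]
          linear_combination A * hbase)
        (by
          intro y hy
          have hNy : 0 ≤ sol.N m y := sol.N_nonneg m y (subset_closure hy)
          rcases eq_or_lt_of_le hNy with h0 | hpos
          · rw [← h0, hg0]
            exact mul_nonneg hAnonneg (hΦbpos y (subset_closure hy)).le
          · have h1 : g (sol.N m y) ≤ g'0 * sol.N m y := hglin _ hpos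
            have h2 : sol.N m y ≤ C₀ * ρ ^ m * Φb y := ih y (subset_closure hy)
            have h3 : g'0 * sol.N m y ≤ g'0 * (C₀ * ρ ^ m * Φb y) :=
              mul_le_mul_of_nonneg_left h2 hg'0pos.le
            rw [hAdef]
            calc g (sol.N m y) ≤ g'0 * (C₀ * ρ ^ m * Φb y) := le_trans h1 h3
              _ = g'0 * (C₀ * ρ ^ m) * Φb y := by ring)
      have hrec : sol.N (m + 1) x = sol.u m x 1 := sol.recur m x hx
      have hu1 := hcomp x hx 1 (by norm_num)
      rw [hrec]
      calc sol.u m x 1 ≤ Real.exp (μb * 1) * (A * Φb x) := hu1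
        _ = C₀ * ρ ^ (m + 1) * Φb x := by
            rw [hAdef, hρdef, mul_one, pow_succ]
            ring
  -- conclusion
  intro x hx
  have hxcl : x ∈ closure Ω := subset_closure hx
  apply squeeze_zero (fun m => sol.N_nonneg m x hxcl)
    (g := fun m => (C₀ * Φb x) * ρ ^ m)
    (fun m => by
      have := hkey m x hxcl
      calc sol.N m x ≤ C₀ * ρ ^ m * Φb x := this
        _ = (C₀ * Φb x) * ρ ^ m := by ring)
  have h1 : Tendsto (fun m : ℕ => ρ ^ m) atTop (𝓝 0) :=
    tendsto_pow_atTop_nhds_zero_of_lt_one hρ0.le hρ1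
  have := h1.const_mul (C₀ * Φb x)
  simpa using this
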